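/- Let ABC be an acute-angled triangle with circumcenter O, and let P be the foot of the altitude from A to line BC. If ∠BCA ≥ ∠ABC + 30°, then ∠CAB + ∠COP < 90°. -/

import Mathlib

open EuclideanGeometry Real
open scoped RealInnerProductSpace

private lemma gram_two (u v w : EuclideanSpace ℝ (Fin 2)) :
    ⟪u, u⟫ * (⟪v, v⟫ * ⟪w, w⟫ - ⟪v, w⟫ ^ 2) =
      ⟪u, v⟫ * (⟪u, v⟫ * ⟪w, w⟫ - ⟪v, w⟫ * ⟪u, w⟫) +
      ⟪u, w⟫ * (⟪v, v⟫ * ⟪u, w⟫ - ⟪u, v⟫ * ⟪v, w⟫) := by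
  simp only [PiLp.inner_apply, RCLike.inner_apply, starRingEnd_apply, star_trivial,
    Fin.sum_univ_two]
  ring

private lemma law_sin (O A B C : EuclideanSpace ℝ (Fin 2)) (hAB : A ≠ B) (hAC : A ≠ C)
    (h1 : dist O A = dist O B) (h2 : dist O A = dist O C) :
    dist B C = 2 * dist O A * Real.sin (∠ B A C) := by
  set x := B - A with hxdef
  set y := C - A with hydef
  set o := O - A with hodef
  have hxO : O - B = o - x := by rw [hodef, hxdef]; abel
  have hyO : O - C = o - y := by rw [hodef, hydef]; abel
  have hxy : B - C = x - y := by rw [hxdef, hydef]; abel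
  have hxne : x ≠ 0 := sub_ne_zero.mpr (Ne.symm hAB)
  have hyne : y ≠ 0 := sub_ne_zero.mpr (Ne.symm hAC)
  have hX : (0:ℝ) < ‖x‖ := norm_pos_iff.mpr hxne
  have hY : (0:ℝ) < ‖y‖ := norm_pos_iff.mpr hyne
  have e1 : ⟪o, x⟫ = ‖x‖ ^ 2 / 2 := by
    have h : ‖o‖ = ‖o - x‖ := by
      rw [← hxO]; simpa [dist_eq_norm] using h1
    have h2 := norm_sub_sq_real o x
    rw [← h] at h2
    linarith
  have e2 : ⟪o, y⟫ = ‖y‖ ^ 2 / 2 := by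
    have h : ‖o‖ = ‖o - y‖ := by
      rw [← hyO]; simpa [dist_eq_norm] using h2
    have h2 := norm_sub_sq_real o y
    rw [← h] at h2
    linarith
  have g := gram_two o x y
  rw [e1, e2, real_inner_self_eq_norm_sq, real_inner_self_eq_norm_sq,
    real_inner_self_eq_norm_sq] at g
  -- g : ‖o‖^2 * (‖x‖^2*‖y‖^2 - ⟪x,y⟫^2) = ...
  have hangle : ∠ B A C = InnerProductGeometry.angle x y := rfl
  have hsin : 0 ≤ Real.sin (∠ B A C) :=
    Real.sin_nonneg_of_nonneg_of_le_pi (angle_nonneg _ _ _) (angle_le_pi _ _ _)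
  have hRn : dist O A = ‖o‖ := by rw [hodef, dist_eq_norm]
  have han : dist B C = ‖x - y‖ := by rw [dist_eq_norm, hxy]
  rw [hRn, han]
  rw [← sq_eq_sq₀ (norm_nonneg _) (by positivity)]
  have hcos := InnerProductGeometry.cos_angle x y
  rw [norm_sub_sq_real, mul_pow, mul_pow, hangle, Real.sin_sq, hcos]
  obtain ⟨q, hq⟩ : ∃ q : ℝ, ⟪x, y⟫ = q := ⟨_, rfl⟩
  obtain ⟨X, hXe⟩ : ∃ X : ℝ, ‖x‖ = X := ⟨_, rfl⟩
  obtain ⟨Y, hYe⟩ : ∃ Y : ℝ, ‖y‖ = Y := ⟨_, rfl⟩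
  obtain ⟨Z, hZe⟩ : ∃ Z : ℝ, ‖o‖ = Z := ⟨_, rfl⟩
  rw [hq, hXe, hYe, hZe] at g ⊢
  rw [hXe] at hX; rw [hYe] at hY
  field_simp
  linear_combination (-4:ℝ) * g


private lemma arith0 (R s t : ℝ) (hR : 0 ≤ R) (ht : 1/2 ≤ t) :
    R * (s - t) ≤ R * (s - 1/2) := by nlinarith

private lemma arith1 (R s cp : ℝ) (hR : 0 < R) (hs1 : s < 1) (hcp0 : 0 ≤ cp)
    (hle : cp ≤ R * (s - 1/2)) : cp < R / 2 := by nlinarith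

private lemma arith2 (R s cp : ℝ) (hR : 0 < R) (hs0 : 0 ≤ s) (hs1 : s < 1)
    (hcp0 : 0 ≤ cp) (hcp : cp < R / 2) (h : (0:ℝ) = R^2 + cp^2 - 2*R*s*cp) : False := by
  nlinarith [mul_le_of_le_one_left hcp0 hs1.le,
    mul_pos (show (0:ℝ) < R - cp by linarith) (show (0:ℝ) < R - cp by linarith)]

private lemma arith3 (R s cp p : ℝ) (hR : 0 < R) (hs0 : 0 ≤ s) (hs1 : s < 1)
    (hcp0 : 0 ≤ cp) (hle : cp ≤ R * (s - 1/2)) (hp : 0 < p)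
    (hp2 : p^2 = R^2 + cp^2 - 2*R*s*cp) : s * p < R - s * cp := by
  have hscp : s * cp ≤ cp := mul_le_of_le_one_left hcp0 hs1.le
  have hcph : cp < R/2 := by nlinarith
  have h2scp : 2*s*cp < R := by nlinarith
  have hRscp : 0 < R - s*cp := by nlinarith
  have hkey : (R - s*cp)^2 - (s*p)^2 = (1-s^2)*R*(R - 2*s*cp) := by
    linear_combination (-(s^2)) * hp2
  have hpos : 0 < (1-s^2)*R*(R-2*s*cp) := by
    apply mul_pos (mul_pos (by nlinarith) hR); linarith
  nlinarith [mul_nonneg hs0 hp.le]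

set_option maxHeartbeats 1000000 in
/-- IMO 2001 P1: `ABC` is an acute triangle with circumcenter `O`, `P` is the foot of
the altitude from `A` to line `BC`.  If `∠BCA ≥ ∠ABC + 30°` then `∠CAB + ∠COP < 90°`. -/
theorem imo2001_p1 (A B C O P : EuclideanSpace ℝ (Fin 2))
    (hABC : AffineIndependent ℝ ![A, B, C])
    (hacuteA : ∠ B A C < π / 2) (hacuteB : ∠ A B C < π / 2) (hacuteC : ∠ B C A < π / 2)
    (hOA : dist O A = dist O B) (hOB : dist O B = dist O C)
    (hPline : Collinear ℝ {B, C, P})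
    (hPfoot : inner ℝ (A - P) (B - C) = (0 : ℝ))
    (hangle : ∠ A B C + π / 6 ≤ ∠ B C A) :
    ∠ C A B + ∠ C O P < π / 2 := by
  have hAB : A ≠ B := by
    intro h
    have h01 : (0 : Fin 3) = 1 := hABC.injective (by simp [h])
    simp at h01
  have hAC : A ≠ C := by
    intro h
    have h02 : (0 : Fin 3) = 2 := hABC.injective (by simp [h])
    simp at h02
  have hBC : B ≠ C := by
    intro h
    have h12 : (1 : Fin 3) = 2 := hABC.injective (by simp [h])
    simp at h12
  have hncol : ¬ Collinear ℝ ({A, B, C} : Set (EuclideanSpace ℝ (Fin 2))) :=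
    affineIndependent_iff_not_collinear_set.mp hABC
  set α := ∠ B A C with hαdef
  set β := ∠ A B C with hβdef
  set γ := ∠ B C A with hγdef
  set s := Real.sin α with hsdef
  have hCAB : ∠ C A B = α := angle_comm C A B
  have hsum : β + γ + α = π := by
    have := angle_add_angle_add_angle_eq_pi (p₁ := A) (p₂ := B) (p₃ := C)
      (Ne.symm hAB)
    rw [hCAB] at this
    linarith
  have hβpos : 0 < β := angle_pos_of_not_collinear hncol
  have hα0 : 0 ≤ α := angle_nonneg _ _ _
  have hγ0 : 0 ≤ γ := angle_nonneg _ _ _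
  have hs0 : 0 ≤ s := Real.sin_nonneg_of_nonneg_of_le_pi hα0 (angle_le_pi _ _ _)
  have hs1 : s < 1 := by
    have hmem1 : α ∈ Set.Icc (-(π/2)) (π/2) := ⟨by linarith [Real.pi_pos], le_of_lt hacuteA⟩
    have hmem2 : (π/2) ∈ Set.Icc (-(π/2)) (π/2) := ⟨by linarith [Real.pi_pos], le_refl _⟩
    have := Real.strictMonoOn_sin hmem1 hmem2 hacuteA
    rwa [Real.sin_pi_div_two] at this
  set R := dist O A with hRdef
  have hRpos : 0 < R := by
    rcases eq_or_lt_of_le (dist_nonneg (x := O) (y := A)) with h | h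
    · exfalso
      have hOA0 : O = A := dist_eq_zero.mp h.symm
      have hOB0 : O = B := dist_eq_zero.mp (hOA ▸ h.symm)
      exact hAB (hOA0 ▸ hOB0)
    · exact h
  set a := dist B C with hadef
  set b := dist A C with hbdef
  have hapos : 0 < a := dist_pos.mpr hBC
  have hbpos : 0 < b := dist_pos.mpr hAC
  have ha : a = 2 * R * s := law_sin O A B C hAB hAC hOA (hOA.trans hOB)
  have hb : b = 2 * R * Real.sin β := by
    have := law_sin O B A C (Ne.symm hAB) hBC hOA.symm hOB
    rwa [← hOA] at this
  -- the foot P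
  obtain ⟨r, hP⟩ : ∃ r : ℝ, P - C = r • (B - C) := by
    have hC : C ∈ ({B, C, P} : Set (EuclideanSpace ℝ (Fin 2))) := by simp
    rw [collinear_iff_of_mem hC] at hPline
    obtain ⟨v, hv⟩ := hPline
    obtain ⟨tB, htB⟩ := hv B (by simp)
    obtain ⟨tP, htP⟩ := hv P (by simp)
    have htBne : tB ≠ 0 := by
      intro h
      rw [h, zero_smul] at htB
      simp at htB
      exact hBC htB
    refine ⟨tP / tB, ?_⟩
    rw [htP, htB]
    simp [smul_smul]
    field_simp
  have hγcos : Real.cos γ = ⟪B - C, A - C⟫ / (a * b) := by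
    rw [hγdef, show ∠ B C A = InnerProductGeometry.angle (B - C) (A - C) from rfl,
      InnerProductGeometry.cos_angle, hadef, hbdef, dist_eq_norm, dist_eq_norm]
  have h5 : ⟪A - C, B - C⟫ = r * a ^ 2 := by
    have hAP : A - P = (A - C) - r • (B - C) := by
      rw [← hP]; abel
    rw [hAP] at hPfoot
    have : ⟪A - C, B - C⟫ - r * ⟪B - C, B - C⟫ = 0 := by
      rw [← real_inner_smul_left, ← inner_sub_left]; exact hPfoot
    rw [real_inner_self_eq_norm_sq, ← dist_eq_norm, ← hadef] at this
    linarith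
  have hcosγpos : 0 < Real.cos γ :=
    Real.cos_pos_of_mem_Ioo ⟨by linarith [Real.pi_pos], hacuteC⟩
  have h6 : r * a = b * Real.cos γ := by
    rw [hγcos, real_inner_comm, h5]
    field_simp
  have hrpos : 0 ≤ r := by
    by_contra hneg
    push_neg at hneg
    have h1 : r * a < 0 := mul_neg_of_neg_of_pos hneg hapos
    have h2 : 0 < b * Real.cos γ := mul_pos hbpos hcosγpos
    linarith [h6]
  set cp := dist C P with hcpdef
  have hra : r * a = cp := by
    rw [hcpdef, dist_comm, dist_eq_norm, hP, norm_smul, Real.norm_eq_abs,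
      abs_of_nonneg hrpos, ← dist_eq_norm, ← hadef]
  have hcppos : 0 ≤ cp := dist_nonneg
  -- cp ≤ R (s - 1/2)
  have hcp_le : cp ≤ R * (s - 1/2) := by
    have h2sin : 2 * Real.sin β * Real.cos γ = s - Real.sin (γ - β) := by
      have hβγ : β + γ = π - α := by linarith
      have hsin : Real.sin (β + γ) = s := by rw [hβγ, Real.sin_pi_sub]
      calc 2 * Real.sin β * Real.cos γ = Real.sin (β + γ) - Real.sin (γ - β) := by
            rw [Real.sin_add, Real.sin_sub]; ring
        _ = s - Real.sin (γ - β) := by rw [hsin]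
    have hsinγβ : 1/2 ≤ Real.sin (γ - β) := by
      rw [← Real.sin_pi_div_six]
      apply Real.sin_le_sin_of_le_of_le_pi_div_two
      · linarith [Real.pi_pos]
      · linarith
      · linarith
    have : cp = R * (2 * Real.sin β * Real.cos γ) := by
      rw [← hra, h6, hb]; ring
    rw [this, h2sin]
    exact arith0 R s _ hRpos.le hsinγβ
  -- 2⟪O-C, B-C⟫ = a²
  have hOBC : 2 * ⟪O - C, B - C⟫ = a ^ 2 := by
    have hOBn : ‖(O - C) - (B - C)‖ = ‖O - C‖ := by
      have h1 : (O - C) - (B - C) = O - B := by abel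
      rw [h1]
      have h2 : dist O B = dist O C := hOB
      rw [dist_eq_norm, dist_eq_norm] at h2
      exact h2
    have h2 := norm_sub_sq_real (O - C) (B - C)
    rw [hOBn] at h2
    have h3 : ‖B - C‖ = a := by rw [hadef, dist_eq_norm]
    rw [h3] at h2
    linarith
  have hOCP : ⟪O - C, P - C⟫ = R * s * cp := by
    have h1 : ⟪O - C, P - C⟫ = r * ⟪O - C, B - C⟫ := by
      rw [hP, real_inner_smul_right]
    rw [h1]
    linear_combination (r/2) * hOBC + (a/2) * hra + (cp/2) * ha
  set p := dist O P with hpdef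
  have hOC : dist O C = R := (hOA.trans hOB).symm
  have hp2 : p ^ 2 = R ^ 2 + cp ^ 2 - 2 * R * s * cp := by
    have h1 : p = ‖(O - C) - (P - C)‖ := by
      rw [hpdef, dist_eq_norm]
      congr 1
      abel
    have h2 := norm_sub_sq_real (O - C) (P - C)
    have h3 : ‖O - C‖ = R := by rw [← dist_eq_norm, hOC]
    have h4 : ‖P - C‖ = cp := by rw [← dist_eq_norm, ← dist_comm, hcpdef]
    rw [h3, h4, hOCP] at h2
    rw [h1, h2]
    ring
  have hcphalf : cp < R / 2 := arith1 R s cp hRpos hs1 hcppos hcp_le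
  have hppos : 0 < p := by
    have hpn : 0 ≤ p := dist_nonneg
    rcases eq_or_lt_of_le hpn with h | h
    · exfalso
      rw [← h] at hp2
      have : (0:ℝ) ^ 2 = R ^ 2 + cp ^ 2 - 2 * R * s * cp := hp2
      exact arith2 R s cp hRpos hs0 hs1 hcppos hcphalf (by linarith [this])
    · exact h
  -- law of cosines in triangle C O P
  have hlaw := EuclideanGeometry.law_cos C O P
  rw [show dist C O = R by rw [dist_comm]; exact hOC,
    show dist P O = p by rw [dist_comm], ← hcpdef] at hlaw
  have h7 : 2 * R * (p * Real.cos (∠ C O P)) = 2 * R * (R - s * cp) := by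
    linear_combination hp2 + hlaw
  have hu : p * Real.cos (∠ C O P) = R - s * cp :=
    mul_left_cancel₀ (by positivity) h7
  -- final comparison
  rw [hCAB]
  have hαlt : α < π / 2 := hacuteA
  suffices h : ∠ C O P < π / 2 - α by linarith
  have hfin : s * p < R - s * cp :=
    arith3 R s cp p hRpos hs0 hs1 hcppos hcp_le hppos hp2
  have hcosgoal : Real.cos (π/2 - α) < Real.cos (∠ C O P) := by
    rw [Real.cos_pi_div_two_sub, ← hsdef]
    have hcosval : Real.cos (∠ C O P) = (R - s * cp) / p := by
      rw [eq_div_iff hppos.ne']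
      linear_combination hu
    rw [hcosval, lt_div_iff₀ hppos]
    linarith
  have hmem1 : π/2 - α ∈ Set.Icc (0:ℝ) π := ⟨by linarith, by linarith [Real.pi_pos]⟩
  have hmem2 : ∠ C O P ∈ Set.Icc (0:ℝ) π := ⟨angle_nonneg _ _ _, angle_le_pi _ _ _⟩
  exact (Real.strictAntiOn_cos.lt_iff_gt hmem1 hmem2).mp hcosgoal
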